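/- For any automorphisms α and β of a finitely generated group G and any n ≥ 1, Flux_{αβ}(n) ≥ Flux_β(n) − Flux_α(n) and Flux_{αβ}(n) ≥ Flux_α(n) − Flux_β(n), where αβ applies α first and then β. -/
import Mathlib


/-- Word length of `g` with respect to the finite generating set `X` (letters from `X ∪ X⁻¹`). -/
noncomputable def wordLength {G : Type*} [Group G] (X : Finset G) (g : G) : ℕ :=
  sInf {n | ∃ l : List G, (∀ a ∈ l, a ∈ X ∨ a⁻¹ ∈ X) ∧ l.prod = g ∧ l.length = n}

/-- The ball of radius `n` in `G` with respect to the word length. -/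
noncomputable def ball {G : Type*} [Group G] (X : Finset G) (n : ℕ) : Set G :=
  {g | wordLength X g ≤ n}

/-- `curlFun X φ n = #{w : |w| ≤ n, |φ(w)| ≤ n}`. -/
noncomputable def curlFun {G : Type*} [Group G] (X : Finset G) (φ : G → G) (n : ℕ) : ℕ :=
  {w : G | wordLength X w ≤ n ∧ wordLength X (φ w) ≤ n}.ncard

/-- `fluxFun X φ n = #{w : |w| ≤ n, |φ(w)| > n}`. -/
noncomputable def fluxFun {G : Type*} [Group G] (X : Finset G) (φ : G → G) (n : ℕ) : ℕ :=
  {w : G | wordLength X w ≤ n ∧ n < wordLength X (φ w)}.ncard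


lemma ball_finite {G : Type*} [Group G] (X : Finset G)
    (hX : Subgroup.closure (X : Set G) = ⊤) (n : ℕ) : (ball X n).Finite := by
  classical
  set Y : Set G := {g : G | g ∈ X ∨ g⁻¹ ∈ X} with hYdef
  have hY : Y.Finite := by
    have : Y ⊆ (X : Set G) ∪ (fun g => g⁻¹) '' (X : Set G) := by
      rintro g (h | h)
      · exact Or.inl h
      · exact Or.inr ⟨g⁻¹, h, inv_inv g⟩
    exact (X.finite_toSet.union (X.finite_toSet.image _)).subset this
  have : Finite Y := hY
  have hL : {l : List G | (∀ a ∈ l, a ∈ Y) ∧ l.length ≤ n}.Finite := by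
    have h1 : {l : List Y | l.length ≤ n}.Finite := List.finite_length_le Y n
    have h2 := h1.image (List.map (Subtype.val : Y → G))
    apply h2.subset
    rintro l ⟨hmem, hlen⟩
    refine ⟨l.pmap (fun a ha => (⟨a, ha⟩ : Y)) hmem, by simpa using hlen, ?_⟩
    simp [List.map_pmap]
  apply (hL.image List.prod).subset
  intro g hg
  have hmem : g ∈ Subgroup.closure (X : Set G) := hX ▸ Subgroup.mem_top g
  have hne : {m | ∃ l : List G, (∀ a ∈ l, a ∈ X ∨ a⁻¹ ∈ X) ∧ l.prod = g ∧ l.length = m}.Nonempty := by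
    have : g ∈ (Subgroup.closure (X : Set G)).toSubmonoid := hmem
    rw [Subgroup.closure_toSubmonoid] at this
    obtain ⟨l, hl, hprod⟩ := Submonoid.exists_list_of_mem_closure this
    refine ⟨l.length, l, ?_, hprod, rfl⟩
    intro a ha
    rcases hl a ha with h | h
    · exact Or.inl h
    · exact Or.inr (Set.mem_inv.mp h)
  have := Nat.sInf_mem hne
  obtain ⟨l, hlmem, hprod, hlen⟩ := this
  exact ⟨l, ⟨fun a ha => hlmem a ha, hlen ▸ hg⟩, hprod⟩

lemma flux_eq {G : Type*} [Group G] (X : Finset G) (φ : G → G) (n : ℕ) :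
    fluxFun X φ n = (ball X n \ φ ⁻¹' (ball X n)).ncard := by
  unfold fluxFun ball
  congr 1
  ext w
  simp [Set.mem_diff, not_le]

lemma flux_subadd {G : Type*} [Group G] (X : Finset G)
    (hX : Subgroup.closure (X : Set G) = ⊤) (φ ψ : G → G)
    (hφ : Function.Injective φ) (n : ℕ) :
    fluxFun X (fun w => ψ (φ w)) n ≤ fluxFun X φ n + fluxFun X ψ n := by
  have hB := ball_finite X hX n
  rw [flux_eq, flux_eq, flux_eq]
  set B := ball X n
  have hsub : B \ (fun w => ψ (φ w)) ⁻¹' B ⊆ (B \ φ ⁻¹' B) ∪ φ ⁻¹' (B \ ψ ⁻¹' B) := by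
    rintro w ⟨hw, hw2⟩
    by_cases h : φ w ∈ B
    · exact Or.inr ⟨h, hw2⟩
    · exact Or.inl ⟨hw, h⟩
  have hfin2 : (B \ ψ ⁻¹' B).Finite := hB.subset Set.diff_subset
  have hfinpre : (φ ⁻¹' (B \ ψ ⁻¹' B)).Finite := hfin2.preimage hφ.injOn
  calc (B \ (fun w => ψ (φ w)) ⁻¹' B).ncard
      ≤ ((B \ φ ⁻¹' B) ∪ φ ⁻¹' (B \ ψ ⁻¹' B)).ncard :=
        Set.ncard_le_ncard hsub ((hB.subset Set.diff_subset).union hfinpre)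
    _ ≤ (B \ φ ⁻¹' B).ncard + (φ ⁻¹' (B \ ψ ⁻¹' B)).ncard := Set.ncard_union_le _ _
    _ ≤ (B \ φ ⁻¹' B).ncard + (B \ ψ ⁻¹' B).ncard := by
        have hle : (φ ⁻¹' (B \ ψ ⁻¹' B)).ncard ≤ (B \ ψ ⁻¹' B).ncard := by
          calc (φ ⁻¹' (B \ ψ ⁻¹' B)).ncard = (φ '' (φ ⁻¹' (B \ ψ ⁻¹' B))).ncard :=
                (Set.ncard_image_of_injective _ hφ).symm
            _ ≤ (B \ ψ ⁻¹' B).ncard :=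
                Set.ncard_le_ncard (Set.image_preimage_subset _ _) hfin2
        exact Nat.add_le_add_left hle _

lemma flux_inv {G : Type*} [Group G] (X : Finset G)
    (hX : Subgroup.closure (X : Set G) = ⊤) (α : G ≃* G) (n : ℕ) :
    fluxFun X (⇑α) n = fluxFun X (⇑α.symm) n := by
  have hB := ball_finite X hX n
  rw [flux_eq, flux_eq]
  set B := ball X n
  have h1 : (⇑α) ⁻¹' B = ⇑α.symm '' B := by
    ext w
    constructor
    · intro hw; exact ⟨α w, hw, by simp⟩
    · rintro ⟨x, hx, rfl⟩; simpa using hx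
  have h2 : (⇑α.symm) ⁻¹' B = ⇑α '' B := by
    ext w
    constructor
    · intro hw; exact ⟨α.symm w, hw, by simp⟩
    · rintro ⟨x, hx, rfl⟩; simpa using hx
  rw [h1, h2]
  have key : (B ∩ ⇑α.symm '' B).ncard = (B ∩ ⇑α '' B).ncard := by
    have himg : ⇑α '' (⇑α.symm '' B) = B := by
      ext w
      constructor
      · rintro ⟨x, ⟨y, hy, rfl⟩, rfl⟩; simpa using hy
      · intro hw; exact ⟨α.symm w, ⟨w, hw, rfl⟩, by simp⟩
    have : ⇑α '' (B ∩ ⇑α.symm '' B) = (⇑α '' B) ∩ B := by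
      rw [Set.image_inter α.injective, himg]
    rw [← Set.ncard_image_of_injective (B ∩ ⇑α.symm '' B) α.injective, this, Set.inter_comm]
  have e1 := Set.ncard_inter_add_ncard_diff_eq_ncard B (⇑α.symm '' B) hB
  have e2 := Set.ncard_inter_add_ncard_diff_eq_ncard B (⇑α '' B) hB
  omega

/-- For any automorphisms `α` and `β` of a finitely generated group `G` and any `n ≥ 1`,
`Flux_{αβ}(n) ≥ Flux_β(n) − Flux_α(n)` and `Flux_{αβ}(n) ≥ Flux_α(n) − Flux_β(n)`,
where the composite applies `α` first, then `β`. -/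
theorem stmt_6 {G : Type*} [Group G] (X : Finset G)
    (hX : Subgroup.closure (X : Set G) = ⊤) (α β : G ≃* G) (n : ℕ) (hn : 1 ≤ n) :
    (fluxFun X (fun w => β (α w)) n : ℤ) ≥ (fluxFun X β n : ℤ) - (fluxFun X α n : ℤ) ∧
    (fluxFun X (fun w => β (α w)) n : ℤ) ≥ (fluxFun X α n : ℤ) - (fluxFun X β n : ℤ) := by
  have hαinj : Function.Injective (fun w => β (α w)) :=
    fun a b h => α.injective (β.injective h)
  have h1 := flux_subadd X hX (⇑α.symm) (fun w => β (α w)) α.symm.injective n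
  have e1 : (fun w => β (α (α.symm w))) = ⇑β := by funext w; simp
  rw [show (fun w => (fun w => β (α w)) (α.symm w)) = ⇑β from e1] at h1
  rw [← flux_inv X hX α n] at h1
  have h2 := flux_subadd X hX (fun w => β (α w)) (⇑β.symm) hαinj n
  have e2 : (fun w => β.symm (β (α w))) = ⇑α := by funext w; simp
  rw [show (fun w => β.symm ((fun w => β (α w)) w)) = ⇑α from e2] at h2
  rw [← flux_inv X hX β n] at h2
  constructor <;> omega
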